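/- Let A be an m×n matrix over K all of whose entries are nonzero, and let (λ_1,…,λ_m) ∈ K^m be a nonzero vector such that Σ_{i=1}^m λ_i a_{ik} = 0 for every k ∈ {1,…,n}. Then the tuple (deg λ_1,…,deg λ_m) ∈ (ℝ∪{∞})^m realizes the tropical dependence of the rows of the real matrix deg A (whose (i,k) entry is deg a_{ik}). -/

import Mathlib

noncomputable section

/-- The field of generalized power series over ℝ with complex coefficients. -/
abbrev K : Type := HahnSeries ℝ ℂ

open Classical in
/-- The degree of an element of `K`: the least exponent of its support, `⊤` for `0`. -/
noncomputable def Kdeg (a : K) : WithTop ℝ :=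
  if a = 0 then ⊤ else ((HahnSeries.order a : ℝ) : WithTop ℝ)

/-- A square real matrix is tropically non-singular if the minimum in the tropical
permanent is attained by exactly one permutation. -/
def TropNonsing {k : ℕ} (S : Matrix (Fin k) (Fin k) ℝ) : Prop :=
  ∃! σ : Equiv.Perm (Fin k), ∀ τ : Equiv.Perm (Fin k),
    (∑ i, S i (σ i)) ≤ ∑ i, S i (τ i)

/-- The tropical rank: the largest size of a tropically non-singular square submatrix. -/
noncomputable def tropRank {m n : ℕ} (A : Matrix (Fin m) (Fin n) ℝ) : ℕ :=
  sSup {r : ℕ | ∃ (ρ : Fin r → Fin m) (c : Fin r → Fin n),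
    Function.Injective ρ ∧ Function.Injective c ∧ TropNonsing (A.submatrix ρ c)}

/-- A matrix over `K` is a lift of a real matrix if degrees of entries match. -/
def IsLift {m n : ℕ} (F : Matrix (Fin m) (Fin n) K) (B : Matrix (Fin m) (Fin n) ℝ) : Prop :=
  ∀ i j, Kdeg (F i j) = (B i j : WithTop ℝ)

/-- The Kapranov rank: the smallest rank over `K` of a lift. -/
noncomputable def kapRank {m n : ℕ} (B : Matrix (Fin m) (Fin n) ℝ) : ℕ :=
  sInf {r : ℕ | ∃ F : Matrix (Fin m) (Fin n) K, IsLift F B ∧ F.rank = r}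

/-- The tuple `lam` realizes the tropical dependence of the rows of `A`. -/
def Realizes {m n : ℕ} (lam : Fin m → WithTop ℝ) (A : Matrix (Fin m) (Fin n) ℝ) : Prop :=
  (∃ τ, lam τ ≠ ⊤) ∧
  ∀ k : Fin n, ∃ τ₁ τ₂ : Fin m, τ₁ ≠ τ₂ ∧
    (∀ τ, lam τ₁ + (A τ₁ k : WithTop ℝ) ≤ lam τ + (A τ k : WithTop ℝ)) ∧
    (∀ τ, lam τ₂ + (A τ₂ k : WithTop ℝ) ≤ lam τ + (A τ k : WithTop ℝ))

open Classical in
/-- The pattern of a real matrix, with entries in `{0, ∞} ⊆ ℝ ∪ {∞}`. -/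
noncomputable def pat {m n : ℕ} (A : Matrix (Fin m) (Fin n) ℝ) (u : Fin m) (v : Fin n) :
    WithTop ℝ :=
  if ∀ i, A u v ≤ A i v then 0 else ⊤

/-- The support of the `j`-th column of the pattern of `A`. -/
def colSupp {m n : ℕ} (A : Matrix (Fin m) (Fin n) ℝ) (j : Fin n) : Set (Fin m) :=
  {u | ∀ i, A u j ≤ A i j}


theorem lin_dep_implies_trop_dep (m n : ℕ) (A : Matrix (Fin m) (Fin n) K)
    (hA : ∀ i k, A i k ≠ 0)
    (lam : Fin m → K) (hlam : lam ≠ 0)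
    (hsum : ∀ k, ∑ i, lam i * A i k = 0)
    (dA : Matrix (Fin m) (Fin n) ℝ) (hdA : ∀ i k, Kdeg (A i k) = (dA i k : WithTop ℝ)) :
    Realizes (fun i => Kdeg (lam i)) dA := by
  classical
  have hne : ∃ i, lam i ≠ 0 := by
    by_contra h; push_neg at h; exact hlam (funext h)
  obtain ⟨i0, hi0⟩ := hne
  refine ⟨⟨i0, by simp [Kdeg, hi0, HahnSeries.orderTop_eq_top]⟩, ?_⟩
  intro k
  set S : Finset (Fin m) := Finset.univ.filter (fun i => lam i ≠ 0) with hS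
  have hSne : S.Nonempty := ⟨i0, Finset.mem_filter.mpr ⟨Finset.mem_univ _, hi0⟩⟩
  set g : Fin m → ℝ := fun i => (lam i * A i k).order with hg
  obtain ⟨i1, hi1S, hi1min⟩ := S.exists_min_image g hSne
  have hi1ne : lam i1 ≠ 0 := by simpa [hS] using hi1S
  set μ : ℝ := g i1 with hμ
  -- degrees of products
  have hdeg : ∀ i, lam i ≠ 0 →
      Kdeg (lam i) + (dA i k : WithTop ℝ) = ((g i : ℝ) : WithTop ℝ) := by
    intro i hi
    have h2 : (dA i k : WithTop ℝ) = (((A i k).order : ℝ) : WithTop ℝ) := by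
      rw [← hdA i k, Kdeg, if_neg (hA i k)]
    rw [Kdeg, if_neg hi, h2, ← WithTop.coe_add, hg]
    simp [HahnSeries.order_mul hi (hA i k)]
  -- existence of a second minimizer
  have key : ∃ i2 ∈ S, i2 ≠ i1 ∧ g i2 = μ := by
    by_contra hcon
    push_neg at hcon
    have hcoeff : (∑ i, lam i * A i k).coeff μ = ∑ i, (lam i * A i k).coeff μ :=
      map_sum (HahnSeries.coeff.addMonoidHom μ) _ _
    have hsingle : ∑ i, (lam i * A i k).coeff μ = (lam i1 * A i1 k).coeff μ := by
      apply Finset.sum_eq_single i1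
      · intro b _ hb
        by_cases hbz : lam b = 0
        · simp [hbz, HahnSeries.orderTop_eq_top]
        · have hbS : b ∈ S := Finset.mem_filter.mpr ⟨Finset.mem_univ _, hbz⟩
          have hlt : μ < g b :=
            lt_of_le_of_ne (hi1min b hbS) (fun h => hcon b hbS hb h.symm)
          exact HahnSeries.coeff_eq_zero_of_lt_order hlt
      · intro h; exact absurd (Finset.mem_univ i1) h
    have hnz : (lam i1 * A i1 k).coeff μ ≠ 0 := by
      have := HahnSeries.coeff_order_eq_zero.not.mpr (mul_ne_zero hi1ne (hA i1 k))
      simpa [hμ, hg] using this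
    rw [hsum k] at hcoeff
    simp only [HahnSeries.coeff_zero] at hcoeff
    exact hnz (by rw [← hsingle, ← hcoeff])
  obtain ⟨i2, hi2S, hi2ne, hi2μ⟩ := key
  have hi2z : lam i2 ≠ 0 := by simpa [hS] using hi2S
  have hbound : ∀ (j : Fin m), (hj : lam j ≠ 0) → (hjμ : g j = μ) →
      ∀ τ, Kdeg (lam j) + (dA j k : WithTop ℝ) ≤ Kdeg (lam τ) + (dA τ k : WithTop ℝ) := by
    intro j hj hjμ τ
    rw [hdeg j hj, hjμ]
    by_cases hτ : lam τ = 0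
    · simp [Kdeg, hτ, HahnSeries.orderTop_eq_top]
    · rw [hdeg τ hτ]
      exact_mod_cast hi1min τ (Finset.mem_filter.mpr ⟨Finset.mem_univ _, hτ⟩)
  exact ⟨i2, i1, hi2ne, hbound i2 hi2z hi2μ, hbound i1 hi1ne rfl⟩

end
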